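/- Suppose G ∈ SL(2,ℝ) satisfies |Trace(G)| > 6. Then there exists an invertible 2×2 real matrix B with |det B| = 1 such that G = B · diag(ρ, ρ⁻¹) · B⁻¹, where ρ, ρ⁻¹ are the real eigenvalues of G, and ‖B‖ ≤ 2 sqrt(‖G‖) / sqrt(|Trace(G)| − 2). -/

import Mathlib

open Matrix
open scoped Matrix.Norms.L2Operator

lemma norm_le_frob (M : Matrix (Fin 2) (Fin 2) ℝ) :
    ‖M‖ ≤ Real.sqrt ((M 0 0)^2 + (M 0 1)^2 + (M 1 0)^2 + (M 1 1)^2) := by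
  rw [Matrix.l2_opNorm_def]
  refine ContinuousLinearMap.opNorm_le_bound _ (Real.sqrt_nonneg _) fun x => ?_
  have hx : ‖x‖ = Real.sqrt ((x 0)^2 + (x 1)^2) := by
    rw [EuclideanSpace.norm_eq]
    simp [Fin.sum_univ_two, Real.norm_eq_abs, sq_abs]
  have happ : ((Matrix.toEuclideanLin.trans LinearMap.toContinuousLinearMap) M) x
      = (WithLp.equiv 2 (Fin 2 → ℝ)).symm (M *ᵥ (WithLp.equiv 2 (Fin 2 → ℝ)) x) := rfl
  rw [happ]
  have hnv : ‖(WithLp.equiv 2 (Fin 2 → ℝ)).symm (M *ᵥ (WithLp.equiv 2 (Fin 2 → ℝ)) x)‖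
      = Real.sqrt ((M 0 0 * x 0 + M 0 1 * x 1)^2 + (M 1 0 * x 0 + M 1 1 * x 1)^2) := by
    rw [EuclideanSpace.norm_eq]
    simp [Fin.sum_univ_two, Real.norm_eq_abs, sq_abs, Matrix.mulVec, dotProduct]
  rw [hnv, hx, ← Real.sqrt_mul (by positivity)]
  apply Real.sqrt_le_sqrt
  nlinarith [sq_nonneg (M 0 0 * x 1 - M 0 1 * x 0), sq_nonneg (M 1 0 * x 1 - M 1 1 * x 0)]

lemma col_le_norm (M : Matrix (Fin 2) (Fin 2) ℝ) (j : Fin 2) :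
    Real.sqrt ((M 0 j)^2 + (M 1 j)^2) ≤ ‖M‖ := by
  have h := M.l2_opNorm_mulVec (EuclideanSpace.single j (1:ℝ))
  rw [EuclideanSpace.norm_single] at h
  simp only [norm_one, mul_one] at h
  refine le_trans (le_of_eq ?_) h
  rw [EuclideanSpace.norm_eq]
  have hmv : (M *ᵥ (EuclideanSpace.single j (1:ℝ) : EuclideanSpace ℝ (Fin 2))) = fun i => M i j := by
    rw [show ((EuclideanSpace.single j (1:ℝ) : EuclideanSpace ℝ (Fin 2)) : Fin 2 → ℝ) = Pi.single j 1 from rfl]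
    ext i
    simp [Matrix.mulVec_single]
  simp only [Fin.sum_univ_two]
  congr 1 <;> simp [hmv, Real.norm_eq_abs, sq_abs]

lemma row_le_norm (M : Matrix (Fin 2) (Fin 2) ℝ) (i : Fin 2) :
    Real.sqrt ((M i 0)^2 + (M i 1)^2) ≤ ‖M‖ := by
  have h := col_le_norm Mᴴ i
  rw [Matrix.l2_opNorm_conjTranspose] at h
  simpa [Matrix.conjTranspose_apply] using h


lemma core_ineq (a b c d N δ p : ℝ) (hdet0 : a*d - b*c = 1) (hs : 6 < |a+d|)
    (hN1 : a^2+c^2 ≤ N^2) (hN2 : b^2+d^2 ≤ N^2) (hN3 : a^2+b^2 ≤ N^2) (hN4 : c^2+d^2 ≤ N^2)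
    (hδ2 : δ^2 = (a+d)^2-4) (hδp : p^2 + b*c = δ*p) (hp2 : (0:ℝ) < p^2) :
    (b^2+p^2)*(c^2+p^2)*(|a+d|-2)^2 ≤ 4*N^2*(p^2+b*c)^2 := by
  obtain ⟨s, hsd⟩ : ∃ x : ℝ, x = |a+d| := ⟨_, rfl⟩
  rw [← hsd] at hs ⊢
  have habs : s^2 = (a+d)^2 := by rw [hsd]; exact sq_abs (a+d)
  have h4N : (b-c)^2 + s^2 ≤ 4*N^2 := by
    nlinarith [hN1, hN2, hN3, hN4, sq_nonneg (b+c), sq_nonneg (a-d), habs]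
  have hδs : δ^2 = (s-2)*(s+2) := by rw [hδ2]; linear_combination -habs
  have key : ((s-2)*(s+2) + (b-c)^2)*(s-2) ≤ 4*N^2*(s+2) := by
    nlinarith [mul_le_mul_of_nonneg_right h4N (show (0:ℝ) ≤ s+2 by linarith),
      sq_nonneg (b-c), hs]
  have hs2 : (0:ℝ) < s - 2 := by linarith
  have hd2 : (p^2+b*c)^2 = p^2*δ^2 := by rw [hδp]; ring
  have h5 : (δ^2 + (b-c)^2)*(s-2)^2 ≤ 4*N^2*δ^2 := by
    calc (δ^2+(b-c)^2)*(s-2)^2 = ((s-2)*(s+2)+(b-c)^2)*(s-2)*(s-2) := by rw [hδs]; ring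
      _ ≤ 4*N^2*(s+2)*(s-2) := mul_le_mul_of_nonneg_right key hs2.le
      _ = 4*N^2*δ^2 := by rw [hδs]; ring
  calc (b^2+p^2)*(c^2+p^2)*(s-2)^2
      = ((p^2+b*c)^2 + p^2*(b-c)^2)*(s-2)^2 := by ring
    _ = (p^2*δ^2 + p^2*(b-c)^2)*(s-2)^2 := by rw [hd2]
    _ = p^2*((δ^2+(b-c)^2)*(s-2)^2) := by ring
    _ ≤ p^2*(4*N^2*δ^2) := mul_le_mul_of_nonneg_left h5 hp2.le
    _ = 4*N^2*(p^2*δ^2) := by ring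
    _ = 4*N^2*(p^2+b*c)^2 := by rw [hd2]

set_option maxHeartbeats 1600000 in
/-- If `G ∈ SL(2,ℝ)` with `|Trace G| > 6`, then `G` is diagonalizable by a matrix `B`
with `|det B| = 1` and `‖B‖ ≤ 2√‖G‖ / √(|Trace G| − 2)`. -/
theorem stmt_2 (G : Matrix (Fin 2) (Fin 2) ℝ) (hG : G.det = 1)
    (htr : 6 < |G.trace|) :
    ∃ ρ : ℝ, ρ + ρ⁻¹ = G.trace ∧
      ∃ B : Matrix (Fin 2) (Fin 2) ℝ, IsUnit B.det ∧ |B.det| = 1 ∧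
        G = B * Matrix.diagonal ![ρ, ρ⁻¹] * B⁻¹ ∧
        ‖B‖ ≤ 2 * Real.sqrt ‖G‖ / Real.sqrt (|G.trace| - 2) := by
  obtain ⟨a, ha⟩ : ∃ x, G 0 0 = x := ⟨_, rfl⟩
  obtain ⟨b, hb⟩ : ∃ x, G 0 1 = x := ⟨_, rfl⟩
  obtain ⟨c, hc⟩ : ∃ x, G 1 0 = x := ⟨_, rfl⟩
  obtain ⟨d, hd⟩ : ∃ x, G 1 1 = x := ⟨_, rfl⟩
  obtain ⟨N, hNd⟩ : ∃ x, ‖G‖ = x := ⟨_, rfl⟩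
  have htrace : G.trace = a + d := by rw [Matrix.trace_fin_two G, ha, hd]
  have hdet0 : a * d - b * c = 1 := by
    rw [← ha, ← hd, ← hb, ← hc, ← Matrix.det_fin_two G]; exact hG
  have hGeta : G = !![a, b; c, d] := by
    rw [← ha, ← hb, ← hc, ← hd]; exact Matrix.etaExpand_eq G |>.symm
  rw [htrace] at htr ⊢
  rw [hNd]
  have hs : 6 < |a + d| := htr
  have hs2 : (0:ℝ) < |a + d| - 2 := by linarith
  have hN0 : (0:ℝ) ≤ N := hNd ▸ norm_nonneg G
  have hsqle : ∀ x : ℝ, 0 ≤ x → Real.sqrt x ≤ N → x ≤ N^2 := by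
    intro x hx h
    nlinarith [Real.sq_sqrt hx, Real.sqrt_nonneg x]
  have hN1 : a^2 + c^2 ≤ N^2 := hsqle _ (by positivity) (by rw [← ha, ← hc, ← hNd]; exact col_le_norm G 0)
  have hN2 : b^2 + d^2 ≤ N^2 := hsqle _ (by positivity) (by rw [← hb, ← hd, ← hNd]; exact col_le_norm G 1)
  have hN3 : a^2 + b^2 ≤ N^2 := hsqle _ (by positivity) (by rw [← ha, ← hb, ← hNd]; exact row_le_norm G 0)
  have hN4 : c^2 + d^2 ≤ N^2 := hsqle _ (by positivity) (by rw [← hc, ← hd, ← hNd]; exact row_le_norm G 1)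
  have habs : |a + d|^2 = (a + d)^2 := sq_abs (a + d)
  have ht36 : 36 < (a + d)^2 := by nlinarith [hs, abs_nonneg (a + d)]
  have ht4 : (0:ℝ) ≤ (a + d)^2 - 4 := by linarith
  obtain ⟨δ, hδd⟩ : ∃ x : ℝ, x = (if 0 ≤ d - a then Real.sqrt ((a+d)^2 - 4) else -Real.sqrt ((a+d)^2 - 4)) := ⟨_, rfl⟩
  have hδ2 : δ^2 = (a+d)^2 - 4 := by
    rw [hδd]; split_ifs
    · exact Real.sq_sqrt ht4
    · rw [neg_pow]; simp [Real.sq_sqrt ht4]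
  have hδe : 0 ≤ δ * (d - a) := by
    rw [hδd]; split_ifs with h
    · exact mul_nonneg (Real.sqrt_nonneg _) h
    · push_neg at h
      have := Real.sqrt_nonneg ((a+d)^2 - 4)
      nlinarith
  obtain ⟨p, hpd⟩ : ∃ x : ℝ, x = (d - a + δ)/2 := ⟨_, rfl⟩
  have hp : p^2 = (d - a)*p + b*c := by
    linear_combination (p + (d - a + δ)/2 - (d - a)) * hpd + (1/4) * hδ2 + hdet0
  have hδp : p^2 + b*c = δ*p := by
    linear_combination hp + (d - a - δ)*hpd - (1/2)*hδ2 - 2*hdet0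
  have h4p : 4*p^2 = (d-a)^2 + 2*(δ*(d-a)) + δ^2 := by rw [hpd]; ring
  have hp2 : (0:ℝ) < p^2 := by linarith [h4p, hδe, hδ2, ht36, sq_nonneg (d-a)]
  have hdp : (0:ℝ) < p^2 + b*c := by
    have h2δp : 2*(δ*p) = δ*(d-a) + δ^2 := by rw [hpd]; ring
    linarith [hδp, h2δp, hδe, hδ2, ht36]
  obtain ⟨ρ, hρd⟩ : ∃ x : ℝ, x = a + p := ⟨_, rfl⟩
  have hρ : ρ * ((a + d) - ρ) = 1 := by
    linear_combination (d - p - ρ)*hρd + hdet0 - hp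
  have hρinv : ρ⁻¹ = (a + d) - ρ := inv_eq_of_mul_eq_one_right hρ
  refine ⟨ρ, by rw [hρinv]; ring, ?_⟩
  obtain ⟨S₁, hS₁d⟩ : ∃ x : ℝ, x = Real.sqrt (b^2 + p^2) := ⟨_, rfl⟩
  obtain ⟨S₂, hS₂d⟩ : ∃ x : ℝ, x = Real.sqrt (c^2 + p^2) := ⟨_, rfl⟩
  have hm₁ : (0:ℝ) < b^2 + p^2 := by positivity
  have hm₂ : (0:ℝ) < c^2 + p^2 := by positivity
  have hS₁ : (0:ℝ) < S₁ := hS₁d ▸ Real.sqrt_pos.2 hm₁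
  have hS₂ : (0:ℝ) < S₂ := hS₂d ▸ Real.sqrt_pos.2 hm₂
  have hS₁2 : S₁^2 = b^2 + p^2 := by rw [hS₁d]; exact Real.sq_sqrt hm₁.le
  have hS₂2 : S₂^2 = c^2 + p^2 := by rw [hS₂d]; exact Real.sq_sqrt hm₂.le
  obtain ⟨u, hud⟩ : ∃ x : ℝ, x = Real.sqrt (p^2 + b*c) := ⟨_, rfl⟩
  have hu : (0:ℝ) < u := hud ▸ Real.sqrt_pos.2 hdp
  have hu2 : u^2 = p^2 + b*c := by rw [hud]; exact Real.sq_sqrt hdp.le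
  obtain ⟨k, hkd⟩ : ∃ x : ℝ, x = Real.sqrt (S₂ / S₁) := ⟨_, rfl⟩
  have hk : (0:ℝ) < k := hkd ▸ Real.sqrt_pos.2 (div_pos hS₂ hS₁)
  have hk2 : k^2 = S₂ / S₁ := by rw [hkd]; exact Real.sq_sqrt (by positivity)
  have hdetB : Matrix.det !![k*b/u, -p/(k*u); k*p/u, c/(k*u)] = 1 := by
    rw [Matrix.det_fin_two_of]
    field_simp
    linear_combination (-1)*hu2
  have hunit : IsUnit (Matrix.det !![k*b/u, -p/(k*u); k*p/u, c/(k*u)]) := by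
    rw [hdetB]; exact isUnit_one
  refine ⟨!![k*b/u, -p/(k*u); k*p/u, c/(k*u)], hunit, by rw [hdetB]; exact abs_one, ?_, ?_⟩
  · -- diagonalization
    have hGB : G * !![k*b/u, -p/(k*u); k*p/u, c/(k*u)]
        = !![k*b/u, -p/(k*u); k*p/u, c/(k*u)] * Matrix.diagonal ![ρ, ρ⁻¹] := by
      rw [hGeta, hρinv, hρd]
      ext i j
      fin_cases i <;> fin_cases j <;>
        simp only [Matrix.mul_apply, Fin.sum_univ_two, Matrix.mul_diagonal,
          Matrix.cons_val', Matrix.cons_val_zero, Matrix.cons_val_one, Matrix.head_cons,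
          Matrix.empty_val', Matrix.cons_val_fin_one, Matrix.head_fin_const, Matrix.of_apply,
          Fin.zero_eta, Fin.mk_one, Matrix.diagonal_apply_eq, ne_eq, zero_ne_one, one_ne_zero,
          not_false_eq_true, Matrix.diagonal_apply_ne, mul_zero, add_zero, zero_add]
      · field_simp
      · field_simp
        linear_combination (-1)*hp
      · field_simp
        linear_combination (-1)*hp
      · field_simp
        ring
    rw [← hGB, Matrix.mul_nonsing_inv_cancel_right _ _ hunit]
  · -- norm bound
    have hfrob := norm_le_frob !![k*b/u, -p/(k*u); k*p/u, c/(k*u)]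
    have h00 : (!![k*b/u, -p/(k*u); k*p/u, c/(k*u)] : Matrix (Fin 2) (Fin 2) ℝ) 0 0 = k*b/u := rfl
    have h01 : (!![k*b/u, -p/(k*u); k*p/u, c/(k*u)] : Matrix (Fin 2) (Fin 2) ℝ) 0 1 = -p/(k*u) := rfl
    have h10 : (!![k*b/u, -p/(k*u); k*p/u, c/(k*u)] : Matrix (Fin 2) (Fin 2) ℝ) 1 0 = k*p/u := rfl
    have h11 : (!![k*b/u, -p/(k*u); k*p/u, c/(k*u)] : Matrix (Fin 2) (Fin 2) ℝ) 1 1 = c/(k*u) := rfl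
    rw [h00, h01, h10, h11] at hfrob
    have e1 : k^2*(b^2+p^2) = S₁*S₂ := by
      rw [hk2, ← hS₁2]; field_simp
    have e2 : c^2+p^2 = S₁*S₂*k^2 := by
      rw [hk2, ← hS₂2]; field_simp
    have hsum : (k*b/u)^2 + (-p/(k*u))^2 + (k*p/u)^2 + (c/(k*u))^2 = 2*(S₁*S₂)/u^2 := by
      calc (k*b/u)^2 + (-p/(k*u))^2 + (k*p/u)^2 + (c/(k*u))^2
          = (k^2*(b^2+p^2) + (c^2+p^2)/k^2)/u^2 := by field_simp; ring
        _ = (S₁*S₂ + (S₁*S₂*k^2)/k^2)/u^2 := by rw [e1, e2]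
        _ = 2*(S₁*S₂)/u^2 := by field_simp; ring
    rw [hsum] at hfrob
    have core := core_ineq a b c d N δ p hdet0 hs hN1 hN2 hN3 hN4 hδ2 hδp hp2
    have hquot : 2*(S₁*S₂)/u^2 ≤ 4*N/(|a+d|-2) := by
      rw [hu2, div_le_div_iff₀ hdp hs2]
      have hS12 : S₁*S₂ = Real.sqrt ((b^2+p^2)*(c^2+p^2)) := by
        rw [hS₁d, hS₂d, ← Real.sqrt_mul hm₁.le]
      have hZ : Real.sqrt ((b^2+p^2)*(c^2+p^2)) ≤ 2*N*(p^2+b*c)/(|a+d|-2) := by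
        rw [show 2*N*(p^2+b*c)/(|a+d|-2) = Real.sqrt ((2*N*(p^2+b*c)/(|a+d|-2))^2) from
          (Real.sqrt_sq (by positivity)).symm]
        apply Real.sqrt_le_sqrt
        rw [div_pow, le_div_iff₀ (by positivity)]
        calc (b^2+p^2)*(c^2+p^2)*(|a+d|-2)^2 ≤ 4*N^2*(p^2+b*c)^2 := core
          _ = (2*N*(p^2+b*c))^2 := by ring
      have hZ' := (le_div_iff₀ hs2).1 hZ
      rw [hS12]
      linarith [hZ']
    calc ‖(!![k*b/u, -p/(k*u); k*p/u, c/(k*u)] : Matrix (Fin 2) (Fin 2) ℝ)‖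
        ≤ Real.sqrt (2*(S₁*S₂)/u^2) := hfrob
      _ ≤ Real.sqrt (4*N/(|a+d|-2)) := Real.sqrt_le_sqrt hquot
      _ = 2*Real.sqrt N/Real.sqrt (|a+d|-2) := by
          rw [Real.sqrt_div (by positivity), show (4:ℝ)*N = 2^2*N from by ring,
            Real.sqrt_mul (by positivity), Real.sqrt_sq (by norm_num)]
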